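/- Let ℓ ≥ 1 and let S be a set of strings each of length exactly ℓ (so no string in S is a substring of another). Then a fixed character position in any string u can be covered by at most ℓ occurrences of length-ℓ substrings, and hence if a maximal greedy collection of q strings from S is realized as a prefix of a permutation of t, the optimal solution has size at most q·ℓ², i.e., greedy is an ℓ²-approximation. -/

import Mathlib

section AuxStmt10

lemma aux_count_eq {α : Type*} [DecidableEq α] (l : List α) (a : α) :
    l.count a = ∑ j ∈ Finset.range l.length, (if l[j]? = some a then 1 else 0) := by
  induction l with
  | nil => simp
  | cons x xs ih =>
    rw [List.length_cons, Finset.sum_range_succ']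
    simp only [List.getElem?_cons_succ, List.getElem?_cons_zero, List.count_cons, ih]
    by_cases hx : x = a <;> simp [hx]

lemma aux_slice {α : Type*} [DecidableEq α] (l : List α) (ℓ i : ℕ) (a : α)
    (h : i + ℓ ≤ l.length) :
    ((l.drop i).take ℓ).count a
      = ∑ j ∈ Finset.range ℓ, (if l[i + j]? = some a then 1 else 0) := by
  have hlen : ((l.drop i).take ℓ).length = ℓ := by
    rw [List.length_take, List.length_drop]; omega
  rw [aux_count_eq, hlen]
  refine Finset.sum_congr rfl fun j hj => ?_
  rw [Finset.mem_range] at hj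
  rw [List.getElem?_take_of_lt hj, List.getElem?_drop]

lemma aux_count_sum {α : Type*} [DecidableEq α] (l : List α) (ℓ : ℕ) (a : α)
    (I : Finset ℕ) (hI : ∀ i ∈ I, i + ℓ ≤ l.length) :
    ∑ i ∈ I, ((l.drop i).take ℓ).count a ≤ ℓ * l.count a := by
  classical
  set F : ℕ → ℕ := fun j => if l[j]? = some a then 1 else 0 with hF
  calc ∑ i ∈ I, ((l.drop i).take ℓ).count a
      = ∑ i ∈ I, ∑ j ∈ Finset.Ico i (i + ℓ), F j := by
        refine Finset.sum_congr rfl fun i hi => ?_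
        rw [aux_slice l ℓ i a (hI i hi), Finset.sum_Ico_eq_sum_range]
        simp [hF]
    _ = ∑ i ∈ I, ∑ j ∈ Finset.range l.length,
          (if i ≤ j ∧ j < i + ℓ then F j else 0) := by
        refine Finset.sum_congr rfl fun i hi => ?_
        have hIi := hI i hi
        have hset : Finset.Ico i (i + ℓ)
            = (Finset.range l.length).filter (fun j => i ≤ j ∧ j < i + ℓ) := by
          ext j
          simp only [Finset.mem_Ico, Finset.mem_filter, Finset.mem_range]
          omega
        rw [hset, Finset.sum_filter]
    _ = ∑ j ∈ Finset.range l.length, ∑ i ∈ I,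
          (if i ≤ j ∧ j < i + ℓ then F j else 0) := Finset.sum_comm
    _ ≤ ∑ j ∈ Finset.range l.length, ℓ * F j := by
        refine Finset.sum_le_sum fun j _ => ?_
        rw [show (∑ i ∈ I, (if i ≤ j ∧ j < i + ℓ then F j else 0))
              = ∑ i ∈ I.filter (fun i => i ≤ j ∧ j < i + ℓ), F j from
            (Finset.sum_filter _ _).symm, Finset.sum_const, smul_eq_mul]
        have hsub : I.filter (fun i => i ≤ j ∧ j < i + ℓ) ⊆ Finset.Icc (j + 1 - ℓ) j := by
          intro i hi
          simp only [Finset.mem_filter] at hi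
          simp only [Finset.mem_Icc]
          omega
        have hcard : (I.filter (fun i => i ≤ j ∧ j < i + ℓ)).card ≤ ℓ := by
          have := Finset.card_le_card hsub
          rw [Nat.card_Icc] at this
          omega
        exact Nat.mul_le_mul_right _ hcard
    _ = ℓ * l.count a := by rw [← Finset.mul_sum, ← aux_count_eq]

lemma aux_arith (ℓ c g m k : ℕ) (hl : 1 ≤ ℓ) (hgc : g ≤ c) (hm : m ≤ g)
    (hk : k ≠ 0 → 1 ≤ g) (h : k * (c + 1) + m ≤ ℓ * c + k * g) : k + m ≤ ℓ * g := by
  rcases Nat.eq_zero_or_pos k with hk0 | hk0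
  · subst hk0
    simpa using hm.trans (Nat.le_mul_of_pos_left g hl)
  · have hg : 1 ≤ g := hk (by omega)
    by_contra hcon
    push_neg at hcon
    have hcon' : ℓ * g + 1 ≤ k + m := hcon
    -- move to ℤ
    have hZ : (k : ℤ) * (c + 1) + m ≤ ℓ * c + k * g := by exact_mod_cast h
    have hZc : ((ℓ : ℤ) * g + 1) ≤ k + m := by exact_mod_cast hcon'
    have hlZ : (1:ℤ) ≤ (ℓ:ℤ) := by exact_mod_cast hl
    have hgZ : (1:ℤ) ≤ (g:ℤ) := by exact_mod_cast hg
    have hmZ : ((m:ℤ)) ≤ (g:ℤ) := by exact_mod_cast hm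
    have hgcZ : ((g:ℤ)) ≤ (c:ℤ) := by exact_mod_cast hgc
    have hX : (0:ℤ) ≤ (ℓ:ℤ) * ((g:ℤ) - 1) + 1 - (m:ℤ) := by nlinarith
    nlinarith [mul_nonneg (by linarith : (0:ℤ) ≤ (c:ℤ) - (g:ℤ)) hX]

lemma aux_sum_count_le {α : Type*} [DecidableEq α] (l : List α) (A : Finset α) :
    ∑ a ∈ A, l.count a ≤ l.length := by
  classical
  have h1 : ∑ a ∈ A, l.count a ≤ ∑ a ∈ A ∪ l.toFinset, l.count a :=
    Finset.sum_le_sum_of_subset Finset.subset_union_left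
  have h2 : ∑ a ∈ A ∪ l.toFinset, l.count a = ∑ a ∈ l.toFinset, l.count a := by
    refine (Finset.sum_subset Finset.subset_union_right ?_).symm
    intro x _ hnx
    exact List.count_eq_zero_of_not_mem (by simpa using hnx)
  have h3 : ∑ a ∈ l.toFinset, l.count a = l.length := by
    have h := Multiset.toFinset_sum_count_eq (l : Multiset α)
    simpa [Multiset.coe_count] using h
  omega


/-- Greedy analysis when all strings of `S` have length exactly `ℓ` (so none
is a substring of another): a fixed position `p` is covered by at most `ℓ`
occurrences of length-`ℓ` substrings, and if a maximal collection `L` of `q`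
strings of `S` is realized as a prefix of a permutation of `t`, then any
subset `T ⊆ S` realizable as substrings of a single permutation of `t`
satisfies `|T| ≤ q·ℓ²`, i.e. greedy is an `ℓ²`-approximation. -/
theorem stmt_10 {α : Type*} [DecidableEq α] (ℓ : ℕ) (hℓ : 1 ≤ ℓ)
    (S : Finset (List α)) (hS : ∀ s ∈ S, s.length = ℓ) (t : Multiset α)
    (L : List (List α)) (hLS : ∀ s ∈ L, s ∈ S) (hLnd : L.Nodup)
    (hLpref : (↑L.flatten : Multiset α) ≤ t)
    (hLmax : ∀ s ∈ S, s ∉ L → ¬ ((↑(L.flatten ++ s) : Multiset α) ≤ t)) :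
    (∀ p : ℕ,
      ((Finset.range (p + 1)).filter
        (fun i => i ≤ p ∧ p ≤ i + ℓ - 1)).card ≤ ℓ) ∧
    (∀ T ⊆ S, (∃ l : List α, (↑l : Multiset α) = t ∧ ∀ s ∈ T, s <:+: l) →
      T.card ≤ L.length * ℓ ^ 2) := by
  classical
  constructor
  · intro p
    have hsub : (Finset.range (p + 1)).filter (fun i => i ≤ p ∧ p ≤ i + ℓ - 1)
        ⊆ Finset.Icc (p + 1 - ℓ) p := by
      intro i hi
      simp only [Finset.mem_filter, Finset.mem_range] at hi
      simp only [Finset.mem_Icc]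
      omega
    have hc := Finset.card_le_card hsub
    rw [Nat.card_Icc] at hc
    omega
  · intro T hTS hex
    obtain ⟨l, hl, hinf⟩ := hex
    rcases Finset.eq_empty_or_nonempty T with rfl | hTne
    · simp
    have hstart : ∀ s ∈ T, ∃ i, i + ℓ ≤ l.length ∧ (l.drop i).take ℓ = s := by
      intro s hs
      obtain ⟨u, v, huv⟩ := hinf s hs
      have hslen : s.length = ℓ := hS s (hTS hs)
      have h2 : u ++ (s ++ v) = l := by rw [← huv]; simp [List.append_assoc]
      refine ⟨u.length, ?_, ?_⟩
      · rw [← h2]; simp [List.length_append]; omega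
      · rw [← h2, List.drop_left, ← hslen, List.take_left]
    choose st hst1 hst2 using hstart
    set w : ℕ → List α := fun i => (l.drop i).take ℓ with hw
    set I : Finset ℕ := T.attach.image (fun s => st s.1 s.2) with hI
    have hwi : ∀ s (hs : s ∈ T), w (st s hs) = s := fun s hs => hst2 s hs
    have hcard : T.card = I.card := by
      rw [hI, Finset.card_image_of_injOn, Finset.card_attach]
      intro s1 _ s2 _ h
      have heq : w (st s1.1 s1.2) = w (st s2.1 s2.2) := congrArg w h
      rw [hwi, hwi] at heq
      exact Subtype.ext heq
    have hImem : ∀ i ∈ I, w i ∈ T ∧ i + ℓ ≤ l.length := by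
      intro i hi
      rw [hI] at hi
      obtain ⟨s, _, rfl⟩ := Finset.mem_image.1 hi
      rw [hwi]
      exact ⟨s.2, hst1 s.1 s.2⟩
    have hinjI : ∀ i1 ∈ I, ∀ i2 ∈ I, w i1 = w i2 → i1 = i2 := by
      intro i1 h1 i2 h2 heq
      rw [hI] at h1 h2
      obtain ⟨s1, _, rfl⟩ := Finset.mem_image.1 h1
      obtain ⟨s2, _, rfl⟩ := Finset.mem_image.1 h2
      rw [hwi s1.1 s1.2, hwi s2.1 s2.2] at heq
      have : s1 = s2 := Subtype.ext heq
      rw [this]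
    have hcount_t : ∀ a : α, Multiset.count a t = l.count a := by
      intro a; rw [← hl, Multiset.coe_count]
    have hgc : ∀ a : α, L.flatten.count a ≤ l.count a := by
      intro a
      have h := Multiset.count_le_of_le a hLpref
      rw [Multiset.coe_count, hcount_t] at h
      exact h
    have hwsub : ∀ i : ℕ, (w i).Sublist l :=
      fun i => ((l.drop i).take_sublist ℓ).trans (l.drop_sublist i)
    have hwitex : ∀ i ∈ I, ∃ a : α, 1 ≤ (w i).count a ∧
        (w i ∉ L → l.count a + 1 ≤ L.flatten.count a + (w i).count a) := by
      intro i hi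
      obtain ⟨hwT, hilen⟩ := hImem i hi
      by_cases hiL : w i ∈ L
      · have hlen : (w i).length = ℓ := hS _ (hTS hwT)
        have hne : w i ≠ [] := by
          intro h; rw [h] at hlen; simp at hlen; omega
        refine ⟨(w i).head hne, ?_, fun h => absurd hiL h⟩
        exact List.count_pos_iff.mpr (List.head_mem hne)
      · have hmax := hLmax (w i) (hTS hwT) hiL
        rw [Multiset.le_iff_count] at hmax
        push_neg at hmax
        obtain ⟨a, ha⟩ := hmax
        have hco : Multiset.count a ↑(L.flatten ++ w i) = L.flatten.count a + (w i).count a := by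
          rw [Multiset.coe_count, List.count_append]
        rw [hco, hcount_t] at ha
        exact ⟨a, by have := hgc a; omega, fun _ => by omega⟩
    choose wit hwit1 hwit2 using hwitex
    obtain ⟨s₀, hs₀⟩ := hTne
    have hi₀ : st s₀ hs₀ ∈ I := by
      rw [hI]
      exact Finset.mem_image.2 ⟨⟨s₀, hs₀⟩, Finset.mem_attach _ _, rfl⟩
    set Wt : ℕ → α := fun i => if h : i ∈ I then wit i h else wit _ hi₀ with hWt
    have hW1 : ∀ i ∈ I, 1 ≤ (w i).count (Wt i) := by
      intro i hi
      simp only [hWt]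
      rw [dif_pos hi]
      exact hwit1 i hi
    have hW2 : ∀ i ∈ I, w i ∉ L →
        l.count (Wt i) + 1 ≤ L.flatten.count (Wt i) + (w i).count (Wt i) := by
      intro i hi
      simp only [hWt]
      rw [dif_pos hi]
      exact hwit2 i hi
    set A : Finset α := I.image Wt with hA
    have hIcard : I.card = ∑ a ∈ A, (I.filter (fun i => Wt i = a)).card :=
      Finset.card_eq_sum_card_image Wt I
    have hper : ∀ a ∈ A, (I.filter (fun i => Wt i = a)).card ≤ ℓ * L.flatten.count a := by
      intro a _
      set Ia := I.filter (fun i => Wt i = a) with hIa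
      set M := Ia.filter (fun i => w i ∈ L) with hM
      set K := Ia.filter (fun i => w i ∉ L) with hK
      have hMmem : ∀ i ∈ M, i ∈ I ∧ Wt i = a ∧ w i ∈ L := by
        intro i hi
        have h1 := Finset.mem_filter.1 hi
        have h2 := Finset.mem_filter.1 h1.1
        exact ⟨h2.1, h2.2, h1.2⟩
      have hKmem : ∀ i ∈ K, i ∈ I ∧ Wt i = a ∧ w i ∉ L := by
        intro i hi
        have h1 := Finset.mem_filter.1 hi
        have h2 := Finset.mem_filter.1 h1.1
        exact ⟨h2.1, h2.2, h1.2⟩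
      have hMK : M.card + K.card = Ia.card :=
        Finset.card_filter_add_card_filter_not (fun i => w i ∈ L)
      have hup : ∑ i ∈ Ia, (w i).count a ≤ ℓ * l.count a := by
        apply aux_count_sum
        intro i hi
        exact (hImem i (Finset.mem_filter.1 hi).1).2
      have hsplit : (∑ i ∈ M, (w i).count a) + (∑ i ∈ K, (w i).count a)
          = ∑ i ∈ Ia, (w i).count a :=
        Finset.sum_filter_add_sum_filter_not Ia (fun i => w i ∈ L) _
      have hMsum : M.card ≤ ∑ i ∈ M, (w i).count a := by
        calc M.card = ∑ _i ∈ M, 1 := Finset.card_eq_sum_ones M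
          _ ≤ ∑ i ∈ M, (w i).count a := by
              refine Finset.sum_le_sum fun i hi => ?_
              obtain ⟨hiI, hia, _⟩ := hMmem i hi
              have := hW1 i hiI
              rwa [hia] at this
      have hKsum : K.card * (l.count a + 1)
          ≤ (∑ i ∈ K, (w i).count a) + K.card * L.flatten.count a := by
        have hstep : ∀ i ∈ K, l.count a + 1 ≤ (w i).count a + L.flatten.count a := by
          intro i hi
          obtain ⟨hiI, hia, hniL⟩ := hKmem i hi
          have := hW2 i hiI hniL
          rw [hia] at this
          omega
        calc K.card * (l.count a + 1) = ∑ _i ∈ K, (l.count a + 1) := by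
              rw [Finset.sum_const, smul_eq_mul]
          _ ≤ ∑ i ∈ K, ((w i).count a + L.flatten.count a) := Finset.sum_le_sum hstep
          _ = (∑ i ∈ K, (w i).count a) + K.card * L.flatten.count a := by
              rw [Finset.sum_add_distrib, Finset.sum_const, smul_eq_mul]
      have hm : M.card ≤ L.flatten.count a := by
        have hinj : Set.InjOn w ↑M := by
          intro i1 h1 i2 h2 heq
          exact hinjI i1 (hMmem i1 h1).1 i2 (hMmem i2 h2).1 heq
        calc M.card = (M.image w).card := (Finset.card_image_of_injOn hinj).symm
          _ = ∑ _s ∈ M.image w, 1 := Finset.card_eq_sum_ones _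
          _ ≤ ∑ s ∈ M.image w, s.count a := by
              refine Finset.sum_le_sum fun s hs => ?_
              obtain ⟨i, hiM, rfl⟩ := Finset.mem_image.1 hs
              obtain ⟨hiI, hia, _⟩ := hMmem i hiM
              have := hW1 i hiI
              rwa [hia] at this
          _ ≤ ∑ s ∈ L.toFinset, s.count a := by
              refine Finset.sum_le_sum_of_subset ?_
              intro s hs
              obtain ⟨i, hiM, rfl⟩ := Finset.mem_image.1 hs
              exact List.mem_toFinset.2 (hMmem i hiM).2.2
          _ = (L.map (fun s => s.count a)).sum := List.sum_toFinset _ hLnd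
          _ = L.flatten.count a := List.count_flatten.symm
      have hk1 : K.card ≠ 0 → 1 ≤ L.flatten.count a := by
        intro hk
        obtain ⟨i, hiK⟩ := Finset.card_pos.1 (Nat.pos_of_ne_zero hk)
        obtain ⟨hiI, hia, hniL⟩ := hKmem i hiK
        have h2 := hW2 i hiI hniL
        rw [hia] at h2
        have h3 : (w i).count a ≤ l.count a := (hwsub i).count_le a
        omega
      have hh : K.card * (l.count a + 1) + M.card
          ≤ ℓ * l.count a + K.card * L.flatten.count a := by linarith
      have harith := aux_arith ℓ (l.count a) (L.flatten.count a) M.card K.card hℓ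
        (hgc a) hm hk1 hh
      linarith
    have hsumA : ∑ a ∈ A, L.flatten.count a ≤ L.flatten.length := aux_sum_count_le _ _
    have hjlen : L.flatten.length = L.length * ℓ := by
      rw [List.length_flatten]
      have hmap : L.map List.length = L.map (fun _ => ℓ) :=
        List.map_congr_left (fun s hs => hS s (hLS s hs))
      rw [hmap, List.map_const']
      simp [List.sum_replicate, smul_eq_mul]
    calc T.card = I.card := hcard
      _ = ∑ a ∈ A, (I.filter (fun i => Wt i = a)).card := hIcard
      _ ≤ ∑ a ∈ A, ℓ * L.flatten.count a := Finset.sum_le_sum hper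
      _ = ℓ * ∑ a ∈ A, L.flatten.count a := by rw [Finset.mul_sum]
      _ ≤ ℓ * L.flatten.length := Nat.mul_le_mul_left ℓ hsumA
      _ = L.length * ℓ ^ 2 := by rw [hjlen]; ring
end AuxStmt10
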